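/- Let $0 \leq \alpha < 1/2$ and $0 < \nu \leq 1$. Let $G \subset \mathbb{R}^n$ be measurable and $\tilde G := \{x : M\mathbf{1}_G(x) > \nu\}$. Then for all $f \in L^2(\mathbb{R}^n)$, $\| \mathbf{1}_G \cdot M(\mathbf{1}_{\mathbb{R}^n \setminus \tilde G} f) \|_{L^2} \leq C_{\alpha,n}\, \nu^\alpha \|f\|_{L^2}$. -/

import Mathlib

open MeasureTheory
open scoped ENNReal
open Metric

/-- The cube with center `c` and half side length `r`. -/
def centeredCube (n : ℕ) (c : Fin n → ℝ) (r : ℝ) : Set (Fin n → ℝ) :=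
  {y | ∀ i, |y i - c i| ≤ r}

/-- The Hardy–Littlewood maximal operator over cubes,
`Mf(x) = sup_{x ∈ I} |I|⁻¹ ∫_I |f|`. -/
noncomputable def maxOp (n : ℕ) (f : (Fin n → ℝ) → ℝ) (x : Fin n → ℝ) : ℝ≥0∞ :=
  ⨆ (c : Fin n → ℝ) (r : ℝ) (_ : 0 < r) (_ : x ∈ centeredCube n c r),
    (∫⁻ y in centeredCube n c r, ENNReal.ofReal |f y|) / volume (centeredCube n c r)

lemma cube_eq_closedBall (n : ℕ) (c : Fin n → ℝ) (r : ℝ) (hr : 0 ≤ r) :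
    centeredCube n c r = Metric.closedBall c r := by
  ext y
  simp only [centeredCube, Set.mem_setOf_eq, Metric.mem_closedBall, dist_pi_le_iff hr,
    Real.dist_eq]

lemma volume_cube (n : ℕ) (c : Fin n → ℝ) (r : ℝ) (hr : 0 ≤ r) :
    volume (centeredCube n c r) = ENNReal.ofReal ((2 * r) ^ n) := by
  rw [cube_eq_closedBall n c r hr, Real.volume_pi_closedBall c hr, Fintype.card_fin]

lemma le_maxOp {n : ℕ} {f : (Fin n → ℝ) → ℝ} {x c : Fin n → ℝ} {r : ℝ}
    (hr : 0 < r) (hx : x ∈ centeredCube n c r) :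
    (∫⁻ y in centeredCube n c r, ENNReal.ofReal |f y|) / volume (centeredCube n c r)
      ≤ maxOp n f x := by
  exact le_iSup_of_le c (le_iSup_of_le r (le_iSup_of_le hr (le_iSup_of_le hx le_rfl)))

lemma lt_maxOp_iff {n : ℕ} {f : (Fin n → ℝ) → ℝ} {x : Fin n → ℝ} {l : ℝ≥0∞} :
    l < maxOp n f x ↔ ∃ c r, 0 < r ∧ x ∈ centeredCube n c r ∧
      l < (∫⁻ y in centeredCube n c r, ENNReal.ofReal |f y|) / volume (centeredCube n c r) := by
  simp only [maxOp, lt_iSup_iff]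
  tauto

lemma maxOp_lsc (n : ℕ) (f : (Fin n → ℝ) → ℝ) : LowerSemicontinuous (maxOp n f) := by
  intro x l hl
  obtain ⟨c, r, hr, hx, havg⟩ := lt_maxOp_iff.mp hl
  set A := ∫⁻ y in centeredCube n c r, ENNReal.ofReal |f y| with hA
  have hlt : l < ⊤ := lt_of_lt_of_le havg le_top
  have key : ∃ δ > (0:ℝ), l < A / ENNReal.ofReal ((2 * (r + δ)) ^ n) := by
    rcases eq_or_ne A ⊤ with hAtop | hAtop
    · refine ⟨1, one_pos, ?_⟩
      rw [hAtop, ENNReal.top_div_of_ne_top (by exact ENNReal.ofReal_ne_top)]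
      exact hlt
    · have hV₀ : volume (centeredCube n c r) = ENNReal.ofReal ((2 * r) ^ n) :=
        volume_cube n c r hr.le
      have hV₀pos : (0:ℝ) < (2 * r) ^ n := pow_pos (by linarith) n
      have hV₀ne : ENNReal.ofReal ((2 * r) ^ n) ≠ 0 := by
        simp [ENNReal.ofReal_eq_zero, not_le, hV₀pos]
      have hmul : l * ENNReal.ofReal ((2 * r) ^ n) < A := by
        rw [hV₀] at havg
        exact (ENNReal.lt_div_iff_mul_lt (Or.inl hV₀ne) (Or.inl ENNReal.ofReal_ne_top)).mp havg
      have hlne : l ≠ ⊤ := hlt.ne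
      have hreal : l.toReal * (2 * r) ^ n < A.toReal := by
        have := (ENNReal.toReal_lt_toReal (by finiteness) hAtop).mpr hmul
        rwa [ENNReal.toReal_mul, ENNReal.toReal_ofReal hV₀pos.le] at this
      have hcont : Continuous fun δ : ℝ => l.toReal * (2 * (r + δ)) ^ n := by fun_prop
      have hopen : IsOpen {δ : ℝ | l.toReal * (2 * (r + δ)) ^ n < A.toReal} :=
        isOpen_lt hcont continuous_const
      have h0 : (0:ℝ) ∈ {δ : ℝ | l.toReal * (2 * (r + δ)) ^ n < A.toReal} := by
        simpa using hreal
      obtain ⟨ε, hε, hball⟩ := Metric.isOpen_iff.mp hopen 0 h0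
      refine ⟨ε / 2, by linarith, ?_⟩
      have hδmem : (ε / 2) ∈ {δ : ℝ | l.toReal * (2 * (r + δ)) ^ n < A.toReal} := by
        apply hball
        simp [Real.dist_eq, abs_of_nonneg, hε.le]
        linarith
      have hrδ : (0:ℝ) < (2 * (r + ε/2)) ^ n := pow_pos (by linarith) n
      rw [ENNReal.lt_div_iff_mul_lt (Or.inl (by simp [ENNReal.ofReal_eq_zero, not_le, hrδ]))
        (Or.inl ENNReal.ofReal_ne_top)]
      have h1 : (l * ENNReal.ofReal ((2 * (r + ε/2)) ^ n)).toReal < A.toReal := by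
        rw [ENNReal.toReal_mul, ENNReal.toReal_ofReal hrδ.le]
        exact hδmem
      exact (ENNReal.toReal_lt_toReal (by finiteness) hAtop).mp h1
  obtain ⟨δ, hδ, hlδ⟩ := key
  rw [Metric.eventually_nhds_iff]
  refine ⟨δ, hδ, fun y hy => ?_⟩
  have hycube : y ∈ centeredCube n c (r + δ) := by
    intro i
    have h1 : |y i - x i| ≤ dist y x := by
      rw [dist_pi_def]
      have := Finset.le_sup (f := fun i => nndist (y i) (x i)) (Finset.mem_univ i)
      calc |y i - x i| = dist (y i) (x i) := (Real.dist_eq _ _).symm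
        _ ≤ _ := by exact_mod_cast this
    have h2 := hx i
    calc |y i - c i| ≤ |y i - x i| + |x i - c i| := abs_sub_le _ _ _
      _ ≤ r + δ := by linarith [le_of_lt (lt_of_le_of_lt h1 hy)]
  refine lt_of_lt_of_le ?_ (le_maxOp (by linarith) hycube)
  rw [volume_cube n c (r + δ) (by linarith)]
  refine lt_of_lt_of_le hlδ ?_
  apply ENNReal.div_le_div_right
  exact lintegral_mono_set (by
    rw [cube_eq_closedBall n c r hr.le, cube_eq_closedBall n c (r+δ) (by linarith)]
    exact Metric.closedBall_subset_closedBall (by linarith))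

lemma maxOp_measurable (n : ℕ) (f : (Fin n → ℝ) → ℝ) : Measurable (maxOp n f) :=
  (maxOp_lsc n f).measurable

lemma maxOp_le_of_bounded {n : ℕ} {f : (Fin n → ℝ) → ℝ} {t : ℝ} (ht : ∀ y, |f y| ≤ t)
    (x : Fin n → ℝ) : maxOp n f x ≤ ENNReal.ofReal t := by
  refine iSup_le fun c => iSup_le fun r => iSup_le fun hr => iSup_le fun hx => ?_
  apply ENNReal.div_le_of_le_mul
  calc (∫⁻ y in centeredCube n c r, ENNReal.ofReal |f y|)
      ≤ ∫⁻ _ in centeredCube n c r, ENNReal.ofReal t :=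
        setLIntegral_mono' (by
          rw [cube_eq_closedBall n c r hr.le]; exact measurableSet_closedBall)
          (fun y _ => ENNReal.ofReal_le_ofReal (ht y))
    _ = ENNReal.ofReal t * volume (centeredCube n c r) := by
        rw [setLIntegral_const]

lemma maxOp_add_le {n : ℕ} (f g : (Fin n → ℝ) → ℝ) (hf : Measurable f) (x : Fin n → ℝ) :
    maxOp n (fun y => f y + g y) x ≤ maxOp n f x + maxOp n g x := by
  refine iSup_le fun c => iSup_le fun r => iSup_le fun hr => iSup_le fun hx => ?_
  have h1 : (∫⁻ y in centeredCube n c r, ENNReal.ofReal |f y + g y|)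
      ≤ (∫⁻ y in centeredCube n c r, ENNReal.ofReal |f y|)
        + ∫⁻ y in centeredCube n c r, ENNReal.ofReal |g y| := by
    rw [← lintegral_add_left (by fun_prop : Measurable fun y => ENNReal.ofReal |f y|)]
    exact setLIntegral_mono' (by
        rw [cube_eq_closedBall n c r hr.le]; exact measurableSet_closedBall)
        (fun y _ => by
          calc ENNReal.ofReal |f y + g y| ≤ ENNReal.ofReal (|f y| + |g y|) :=
                ENNReal.ofReal_le_ofReal (abs_add_le _ _)
            _ = _ := ENNReal.ofReal_add (abs_nonneg _) (abs_nonneg _))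
  calc (∫⁻ y in centeredCube n c r, ENNReal.ofReal |f y + g y|) / volume (centeredCube n c r)
      ≤ ((∫⁻ y in centeredCube n c r, ENNReal.ofReal |f y|)
        + ∫⁻ y in centeredCube n c r, ENNReal.ofReal |g y|) / volume (centeredCube n c r) :=
        ENNReal.div_le_div_right h1 _
    _ = (∫⁻ y in centeredCube n c r, ENNReal.ofReal |f y|) / volume (centeredCube n c r)
        + (∫⁻ y in centeredCube n c r, ENNReal.ofReal |g y|) / volume (centeredCube n c r) :=
        ENNReal.add_div
    _ ≤ maxOp n f x + maxOp n g x := add_le_add (le_maxOp hr hx) (le_maxOp hr hx)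

lemma weak_type (n : ℕ) (hn : n ≠ 0) (G : Set (Fin n → ℝ)) (hG : MeasurableSet G)
    (ν' : ℝ≥0∞) (g : (Fin n → ℝ) → ℝ)
    (hsupp : ∀ x, g x ≠ 0 → maxOp n (Set.indicator G fun _ => (1:ℝ)) x ≤ ν')
    (lam : ℝ≥0∞) (hlam0 : lam ≠ 0) (hlamtop : lam ≠ ⊤)
    (hint : (∫⁻ x, ENNReal.ofReal |g x|) ≠ ⊤) :
    volume (G ∩ {x | lam < maxOp n g x})
      ≤ 4 ^ n * ν' * (∫⁻ x, ENNReal.ofReal |g x|) / lam := by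
  classical
  set I := ∫⁻ x, ENNReal.ofReal |g x| with hI
  set E := G ∩ {x | lam < maxOp n g x} with hE
  set b : ℝ := (I / lam).toReal with hb
  set R : ℝ := max 1 b / 2 with hR
  -- choose cubes
  have hex : ∀ x : Fin n → ℝ, ∃ c : Fin n → ℝ, ∃ ρ : ℝ, x ∈ E →
      0 < ρ ∧ x ∈ closedBall c ρ ∧
      lam * volume (closedBall c ρ) < (∫⁻ y in closedBall c ρ, ENNReal.ofReal |g y|) ∧
      ρ ≤ R := by
    intro x
    by_cases hx : x ∈ E
    · obtain ⟨c, ρ, hρ, hxc, havg⟩ := lt_maxOp_iff.mp hx.2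
      rw [cube_eq_closedBall n c ρ hρ.le] at hxc havg
      refine ⟨c, ρ, fun _ => ⟨hρ, hxc, ?_, ?_⟩⟩
      · have hV : volume (closedBall c ρ) = ENNReal.ofReal ((2 * ρ) ^ n) :=
          Real.volume_pi_closedBall c hρ.le ▸ by rw [Fintype.card_fin]
        have hVpos : (0:ℝ) < (2 * ρ) ^ n := pow_pos (by linarith) n
        exact (ENNReal.lt_div_iff_mul_lt
          (Or.inl (by simp [hV, ENNReal.ofReal_eq_zero, not_le, hVpos]))
          (Or.inl (by simp [hV]))).mp havg
      · -- radius bound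
        have hV : volume (closedBall c ρ) = ENNReal.ofReal ((2 * ρ) ^ n) :=
          Real.volume_pi_closedBall c hρ.le ▸ by rw [Fintype.card_fin]
        have hVpos : (0:ℝ) < (2 * ρ) ^ n := pow_pos (by linarith) n
        have hmul : lam * volume (closedBall c ρ)
            < ∫⁻ y in closedBall c ρ, ENNReal.ofReal |g y| := by
          exact (ENNReal.lt_div_iff_mul_lt
            (Or.inl (by simp [hV, ENNReal.ofReal_eq_zero, not_le, hVpos]))
            (Or.inl (by simp [hV]))).mp havg
        have hVI : volume (closedBall c ρ) < I / lam := by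
          rw [ENNReal.lt_div_iff_mul_lt (Or.inl hlam0) (Or.inl hlamtop)]
          calc volume (closedBall c ρ) * lam = lam * volume (closedBall c ρ) := mul_comm _ _
            _ < ∫⁻ y in closedBall c ρ, ENNReal.ofReal |g y| := hmul
            _ ≤ I := setLIntegral_le_lintegral _ _
        have hIl : I / lam ≠ ⊤ := by
          simp only [ne_eq, ENNReal.div_eq_top]
          push_neg
          exact ⟨fun _ => hlam0, fun h => absurd h hint⟩
        have h2r : (2 * ρ) ^ n < b := by
          rw [hb]
          rw [hV] at hVI
          exact (ENNReal.ofReal_lt_iff_lt_toReal hVpos.le hIl).mp hVI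
        have h2rb : 2 * ρ ≤ max 1 b := by
          rcases le_or_gt (2 * ρ) 1 with h | h
          · exact h.trans (le_max_left _ _)
          · refine le_trans ?_ (le_max_right _ _)
            calc 2 * ρ ≤ (2 * ρ) ^ n := le_self_pow₀ h.le hn
              _ ≤ b := h2r.le
        rw [hR]; linarith
    · exact ⟨x, 1, fun h => absurd h hx⟩
  choose c ρ hcρ using hex
  obtain ⟨u, huE, hdisj, hcover⟩ :=
    Vitali.exists_disjoint_subfamily_covering_enlargement_closedBall E c ρ R
      (fun a ha => ((hcρ a) ha).2.2.2) 4 (by norm_num)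
  have hucount : u.Countable := by
    have hdisj' : u.PairwiseDisjoint fun a => ball (c a) (ρ a) :=
      hdisj.mono fun a => ball_subset_closedBall
    exact hdisj'.countable_of_isOpen (fun a _ => isOpen_ball)
      (fun a ha => nonempty_ball.mpr ((hcρ a) (huE ha)).1)
  haveI := hucount.to_subtype
  -- covering
  have hEcov : E ⊆ ⋃ a ∈ u, (G ∩ closedBall (c a) (4 * ρ a)) := by
    intro x hx
    obtain ⟨a, ha, hsub⟩ := hcover x hx
    exact Set.mem_biUnion ha ⟨hx.1, hsub ((hcρ x) hx).2.1⟩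
  -- per-ball bound
  have hball : ∀ a ∈ u, volume (G ∩ closedBall (c a) (4 * ρ a))
      ≤ 4 ^ n * ν' * (∫⁻ y in closedBall (c a) (ρ a), ENNReal.ofReal |g y|) / lam := by
    intro a ha
    obtain ⟨hρa, hxa, hmul, _⟩ := (hcρ a) (huE ha)
    -- exists point with g ≠ 0
    have hz : ∃ z ∈ closedBall (c a) (ρ a), g z ≠ 0 := by
      by_contra h
      push_neg at h
      have h0 : (∫⁻ y in closedBall (c a) (ρ a), ENNReal.ofReal |g y|)
          = ∫⁻ _ in closedBall (c a) (ρ a), (0:ℝ≥0∞) :=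
        setLIntegral_congr_fun measurableSet_closedBall
          (fun y hy => by simp [h y hy])
      rw [h0] at hmul
      simp at hmul
    obtain ⟨z, hzball, hgz⟩ := hz
    have hz4 : z ∈ closedBall (c a) (4 * ρ a) :=
      closedBall_subset_closedBall (by linarith) hzball
    have hν : maxOp n (Set.indicator G fun _ => (1:ℝ)) z ≤ ν' := hsupp z hgz
    -- average of indicator over the 4-ball
    have h4ρ : (0:ℝ) < 4 * ρ a := by linarith
    have hcube : centeredCube n (c a) (4 * ρ a) = closedBall (c a) (4 * ρ a) :=
      cube_eq_closedBall n (c a) (4 * ρ a) h4ρ.le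
    have hind : (∫⁻ y in closedBall (c a) (4 * ρ a),
        ENNReal.ofReal |Set.indicator G (fun _ => (1:ℝ)) y|)
        = volume (G ∩ closedBall (c a) (4 * ρ a)) := by
      have : ∀ y, ENNReal.ofReal |Set.indicator G (fun _ => (1:ℝ)) y|
          = Set.indicator G (fun _ => (1:ℝ≥0∞)) y := by
        intro y
        by_cases hy : y ∈ G <;> simp [hy]
      rw [lintegral_congr this, lintegral_indicator hG, setLIntegral_one,
        Measure.restrict_apply hG, Set.inter_comm]
    have havg : volume (G ∩ closedBall (c a) (4 * ρ a))
        / volume (closedBall (c a) (4 * ρ a)) ≤ ν' := by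
      refine le_trans ?_ hν
      have := le_maxOp (f := Set.indicator G fun _ => (1:ℝ)) (x := z) h4ρ
        (by rw [hcube]; exact hz4)
      rw [hcube, hind] at this
      exact this
    have hV4 : volume (closedBall (c a) (4 * ρ a)) = ENNReal.ofReal ((2 * (4 * ρ a)) ^ n) :=
      Real.volume_pi_closedBall (c a) h4ρ.le ▸ by rw [Fintype.card_fin]
    have hV4pos : (0:ℝ) < (2 * (4 * ρ a)) ^ n := pow_pos (by linarith) n
    have hGle : volume (G ∩ closedBall (c a) (4 * ρ a))
        ≤ ν' * volume (closedBall (c a) (4 * ρ a)) := by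
      rw [ENNReal.div_le_iff_le_mul
        (Or.inl (by simp [hV4, ENNReal.ofReal_eq_zero, not_le, hV4pos]))
        (Or.inl (by simp [hV4]))] at havg
      exact havg
    have hV4eq : volume (closedBall (c a) (4 * ρ a))
        = 4 ^ n * volume (closedBall (c a) (ρ a)) := by
      have hVa : volume (closedBall (c a) (ρ a)) = ENNReal.ofReal ((2 * ρ a) ^ n) :=
        Real.volume_pi_closedBall (c a) hρa.le ▸ by rw [Fintype.card_fin]
      rw [hV4, hVa]
      have : (2 * (4 * ρ a)) ^ n = 4 ^ n * (2 * ρ a) ^ n := by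
        rw [← mul_pow]; ring_nf
      rw [this, ENNReal.ofReal_mul (by positivity), ENNReal.ofReal_pow (by norm_num)]
      norm_num
    have hVle : volume (closedBall (c a) (ρ a))
        ≤ (∫⁻ y in closedBall (c a) (ρ a), ENNReal.ofReal |g y|) / lam := by
      rw [ENNReal.le_div_iff_mul_le (Or.inl hlam0) (Or.inl hlamtop)]
      rw [mul_comm]
      exact hmul.le
    calc volume (G ∩ closedBall (c a) (4 * ρ a))
        ≤ ν' * (4 ^ n * volume (closedBall (c a) (ρ a))) := by rw [← hV4eq]; exact hGle
      _ = 4 ^ n * ν' * volume (closedBall (c a) (ρ a)) := by ring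
      _ ≤ 4 ^ n * ν' * ((∫⁻ y in closedBall (c a) (ρ a), ENNReal.ofReal |g y|) / lam) :=
          mul_le_mul_right hVle _
      _ = 4 ^ n * ν' * (∫⁻ y in closedBall (c a) (ρ a), ENNReal.ofReal |g y|) / lam := by
          rw [mul_div_assoc]
  -- sum up
  have hsum : (∑' (a : u), ∫⁻ y in closedBall (c a) (ρ a), ENNReal.ofReal |g y|) ≤ I := by
    have hdisj2 : Pairwise (Function.onFun Disjoint fun a : u => closedBall (c a) (ρ a)) :=
      fun a₁ a₂ hne => hdisj a₁.2 a₂.2 (Subtype.coe_injective.ne hne)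
    rw [← lintegral_iUnion (fun a : u => measurableSet_closedBall) hdisj2]
    exact setLIntegral_le_lintegral _ _
  calc volume E ≤ volume (⋃ a ∈ u, (G ∩ closedBall (c a) (4 * ρ a))) := measure_mono hEcov
    _ ≤ ∑' (a : u), volume (G ∩ closedBall (c a) (4 * ρ a)) := measure_biUnion_le _ hucount _
    _ ≤ ∑' (a : u), 4 ^ n * ν' * (∫⁻ y in closedBall (c a) (ρ a), ENNReal.ofReal |g y|) / lam :=
        ENNReal.tsum_le_tsum (fun a => hball a a.2)
    _ = 4 ^ n * ν' * (∑' (a : u), ∫⁻ y in closedBall (c a) (ρ a), ENNReal.ofReal |g y|) / lam := by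
        simp_rw [div_eq_mul_inv, mul_assoc, ENNReal.tsum_mul_left, ENNReal.tsum_mul_right]
    _ ≤ 4 ^ n * ν' * I / lam := by
        apply ENNReal.div_le_div_right
        exact mul_le_mul_right hsum _

lemma lintegral_two_t (a : ℝ≥0∞) :
    ∫⁻ t in Set.Ioi (0:ℝ), ENNReal.ofReal (2*t) * (if ENNReal.ofReal t < a then 1 else 0)
      = a ^ 2 := by
  have hmemb : ∀ t : ℝ, (if ENNReal.ofReal t < a then (1:ℝ≥0∞) else 0)
      = Set.indicator {s : ℝ | ENNReal.ofReal s < a} (fun _ => (1:ℝ≥0∞)) t := by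
    intro t; rw [Set.indicator_apply]; rfl
  rcases eq_or_ne a ⊤ with rfl | ha
  · have h1 : ∀ t : ℝ, ENNReal.ofReal (2*t) * (if ENNReal.ofReal t < (⊤:ℝ≥0∞) then (1:ℝ≥0∞) else 0)
        = ENNReal.ofReal (2*t) := by
      intro t; simp [ENNReal.ofReal_lt_top]
    rw [lintegral_congr h1]
    have h2 : (⊤:ℝ≥0∞) = 2 * volume (Set.Ioi (1:ℝ)) := by
      rw [Real.volume_Ioi]; simp
    rw [eq_comm]
    have h3 : (2:ℝ≥0∞) * volume (Set.Ioi (1:ℝ)) = ∫⁻ _ in Set.Ioi (1:ℝ), (2:ℝ≥0∞) := by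
      rw [setLIntegral_const]
    have h4 : (∫⁻ _ in Set.Ioi (1:ℝ), (2:ℝ≥0∞)) ≤ ∫⁻ t in Set.Ioi (1:ℝ), ENNReal.ofReal (2*t) := by
      refine setLIntegral_mono' measurableSet_Ioi (fun t ht => ?_)
      have : (2:ℝ≥0∞) = ENNReal.ofReal 2 := by simp
      rw [this]
      exact ENNReal.ofReal_le_ofReal (by simp at ht; linarith)
    have h5 : (∫⁻ t in Set.Ioi (1:ℝ), ENNReal.ofReal (2*t))
        ≤ ∫⁻ t in Set.Ioi (0:ℝ), ENNReal.ofReal (2*t) :=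
      lintegral_mono_set (Set.Ioi_subset_Ioi (by norm_num))
    have := le_trans (h3 ▸ h4) h5
    rw [← h2, top_le_iff] at this
    rw [this]
    simp
  · set m := a.toReal with hm
    have hm0 : 0 ≤ m := ENNReal.toReal_nonneg
    have key : ∀ t ∈ Set.Ioi (0:ℝ),
        ENNReal.ofReal (2*t) * (if ENNReal.ofReal t < a then (1:ℝ≥0∞) else 0)
        = Set.indicator (Set.Iio m) (fun s => ENNReal.ofReal (2*s)) t := by
      intro t ht
      simp only [Set.mem_Ioi] at ht
      rw [Set.indicator_apply]
      by_cases h : ENNReal.ofReal t < a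
      · rw [if_pos h, if_pos, mul_one]
        exact Set.mem_Iio.mpr ((ENNReal.ofReal_lt_iff_lt_toReal ht.le ha).mp h)
      · rw [if_neg h, if_neg, mul_zero]
        intro hc
        exact h ((ENNReal.ofReal_lt_iff_lt_toReal ht.le ha).mpr hc)
    rw [setLIntegral_congr_fun measurableSet_Ioi key,
      lintegral_indicator measurableSet_Iio, Measure.restrict_restrict measurableSet_Iio,
      Set.Iio_inter_Ioi]
    have hInt : IntegrableOn (fun t : ℝ => 2*t) (Set.Ioo 0 m) :=
      (Continuous.integrableOn_Icc (by fun_prop)).mono_set Set.Ioo_subset_Icc_self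
    rw [← MeasureTheory.ofReal_integral_eq_lintegral_ofReal hInt
      ((ae_restrict_iff' measurableSet_Ioo).mpr (Filter.Eventually.of_forall
        (fun t ht => by have := ht.1; positivity)))]
    have hcalc : ∫ t in Set.Ioo 0 m, 2*t = m ^ 2 := by
      rw [← MeasureTheory.integral_Ioc_eq_integral_Ioo,
        ← intervalIntegral.integral_of_le hm0]
      rw [intervalIntegral.integral_const_mul, integral_id]
      ring
    rw [hcalc, ENNReal.ofReal_pow hm0, ENNReal.ofReal_toReal ha]

lemma lintegral_trunc (m : ℝ) (hm : 0 ≤ m) :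
    (∫⁻ t in Set.Ioi (0:ℝ), (if m ≤ t/2 then (0:ℝ≥0∞) else ENNReal.ofReal m))
      = 2 * ENNReal.ofReal m ^ 2 := by
  have key : ∀ t : ℝ, (if m ≤ t/2 then (0:ℝ≥0∞) else ENNReal.ofReal m)
      = Set.indicator (Set.Iio (2*m)) (fun _ => ENNReal.ofReal m) t := by
    intro t
    rw [Set.indicator_apply]
    by_cases h : m ≤ t/2
    · rw [if_pos h, if_neg]; simp only [Set.mem_Iio]; intro hc; linarith
    · rw [if_neg h, if_pos]; simp only [Set.mem_Iio]; push_neg at h; linarith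
  rw [lintegral_congr key, lintegral_indicator measurableSet_Iio,
    Measure.restrict_restrict measurableSet_Iio, Set.Iio_inter_Ioi, setLIntegral_const,
    Real.volume_Ioo]
  have : ENNReal.ofReal (2*m - 0) = 2 * ENNReal.ofReal m := by
    rw [sub_zero, ENNReal.ofReal_mul (by norm_num)]
    norm_num
  rw [this]
  ring

lemma main_est (n : ℕ) (hn : n ≠ 0) (G : Set (Fin n → ℝ)) (hG : MeasurableSet G)
    (ν : ℝ) (hν : 0 < ν) (f : (Fin n → ℝ) → ℝ) (hf : Measurable f)
    (hF : (∫⁻ x, ENNReal.ofReal |f x| ^ 2) ≠ ⊤) :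
    (∫⁻ x in G, (maxOp n (Set.indicator
        ({x | ENNReal.ofReal ν < maxOp n (Set.indicator G (fun _ => (1 : ℝ))) x}ᶜ) f) x) ^ 2)
      ≤ 8 * 4 ^ n * ENNReal.ofReal ν * ∫⁻ x, ENNReal.ofReal |f x| ^ 2 := by
  classical
  set ν' := ENNReal.ofReal ν with hν'
  set Gt := {x | ν' < maxOp n (Set.indicator G (fun _ => (1:ℝ))) x} with hGt
  set g := Set.indicator Gtᶜ f with hgdef
  have hGt_meas : MeasurableSet Gt :=
    measurableSet_lt measurable_const (maxOp_measurable _ _)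
  have hg : Measurable g := hf.indicator hGt_meas.compl
  have hsupp : ∀ x, g x ≠ 0 → maxOp n (Set.indicator G (fun _ => (1:ℝ))) x ≤ ν' := by
    intro x hx
    have hxc : x ∈ Gtᶜ := by
      by_contra hcon
      exact hx (Set.indicator_of_notMem hcon f)
    simpa [hGt, not_lt] using hxc
  set h := maxOp n g with hh_def
  have hh : Measurable h := maxOp_measurable n g
  have hgf : ∀ x, |g x| ≤ |f x| := by
    intro x
    by_cases hx : x ∈ Gtᶜ <;> simp [hgdef, Set.indicator_apply, hx, abs_nonneg]
  have hgsq : (∫⁻ x, ENNReal.ofReal |g x| ^ 2) ≤ ∫⁻ x, ENNReal.ofReal |f x| ^ 2 := by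
    refine lintegral_mono fun x => ?_
    exact pow_le_pow_left' (ENNReal.ofReal_le_ofReal (hgf x)) 2
  set g2 : ℝ → (Fin n → ℝ) → ℝ := fun t x => if |g x| ≤ t/2 then 0 else g x with hg2
  have hg2meas : ∀ t, Measurable (g2 t) := fun t =>
    Measurable.ite (measurableSet_le hg.abs measurable_const) measurable_const hg
  set J : ℝ → ℝ≥0∞ := fun t => ∫⁻ x, ENNReal.ofReal |g2 t x| with hJ
  have hJle : ∀ t : ℝ, 0 < t → J t ≤ ENNReal.ofReal (2/t) * ∫⁻ x, ENNReal.ofReal |g x| ^ 2 := by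
    intro t ht
    rw [← lintegral_const_mul' _ _ ENNReal.ofReal_ne_top]
    refine lintegral_mono fun x => ?_
    by_cases hc : |g x| ≤ t/2
    · simp [hg2, hc]
    · push_neg at hc
      simp only [hg2, if_neg (not_le.mpr hc)]
      have h2 : 1 ≤ (2/t) * |g x| := by
        rw [div_mul_eq_mul_div, le_div_iff₀ ht]; linarith
      have h3 : |g x| ≤ (2/t) * |g x| ^ 2 := by
        calc |g x| = 1 * |g x| := (one_mul _).symm
          _ ≤ ((2/t) * |g x|) * |g x| := mul_le_mul_of_nonneg_right h2 (abs_nonneg _)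
          _ = (2/t) * |g x| ^ 2 := by ring
      calc ENNReal.ofReal |g x| ≤ ENNReal.ofReal ((2/t) * |g x| ^ 2) :=
            ENNReal.ofReal_le_ofReal h3
        _ = ENNReal.ofReal (2/t) * ENNReal.ofReal |g x| ^ 2 := by
            rw [ENNReal.ofReal_mul (by positivity), ENNReal.ofReal_pow (abs_nonneg _)]
  have hJtop : ∀ t : ℝ, 0 < t → J t ≠ ⊤ := by
    intro t ht
    refine ne_top_of_le_ne_top ?_ (hJle t ht)
    exact ENNReal.mul_ne_top ENNReal.ofReal_ne_top (ne_top_of_le_ne_top hF hgsq)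
  -- weak-type bound for each t > 0
  have hweak : ∀ t : ℝ, 0 < t →
      volume (G ∩ {x | ENNReal.ofReal t < h x})
        ≤ 4 ^ n * ν' * J t / ENNReal.ofReal (t/2) := by
    intro t ht
    have hsub : G ∩ {x | ENNReal.ofReal t < h x}
        ⊆ G ∩ {x | ENNReal.ofReal (t/2) < maxOp n (g2 t) x} := by
      rintro x ⟨hxG, hxh⟩
      refine ⟨hxG, ?_⟩
      simp only [Set.mem_setOf_eq] at hxh ⊢
      by_contra hcon
      push_neg at hcon
      have hdecomp : g = fun y => (if |g y| ≤ t/2 then g y else 0) + g2 t y := by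
        funext y
        by_cases hc : |g y| ≤ t/2 <;> simp [hg2, hc]
      have hg1meas : Measurable (fun y => if |g y| ≤ t/2 then g y else 0) :=
        Measurable.ite (measurableSet_le hg.abs measurable_const) hg measurable_const
      have hMle : h x ≤ ENNReal.ofReal (t/2) + maxOp n (g2 t) x := by
        calc h x = maxOp n (fun y => (if |g y| ≤ t/2 then g y else 0) + g2 t y) x := by
              rw [hh_def, ← hdecomp]
          _ ≤ maxOp n (fun y => if |g y| ≤ t/2 then g y else 0) x + maxOp n (g2 t) x :=
              maxOp_add_le _ _ hg1meas x
          _ ≤ ENNReal.ofReal (t/2) + maxOp n (g2 t) x := by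
              refine add_le_add_left (maxOp_le_of_bounded (fun y => ?_) x) _
              by_cases hc : |g y| ≤ t/2
              · simpa [hc] using hc
              · simp [hc]; positivity
      have : h x ≤ ENNReal.ofReal t := by
        calc h x ≤ ENNReal.ofReal (t/2) + maxOp n (g2 t) x := hMle
          _ ≤ ENNReal.ofReal (t/2) + ENNReal.ofReal (t/2) := add_le_add_right hcon _
          _ = ENNReal.ofReal t := by
              rw [← ENNReal.ofReal_add (by positivity) (by positivity)]
              norm_num
      exact absurd hxh (not_lt.mpr this)
    calc volume (G ∩ {x | ENNReal.ofReal t < h x})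
        ≤ volume (G ∩ {x | ENNReal.ofReal (t/2) < maxOp n (g2 t) x}) := measure_mono hsub
      _ ≤ 4 ^ n * ν' * J t / ENNReal.ofReal (t/2) := by
          refine weak_type n hn G hG ν' (g2 t) ?_ _ ?_ ENNReal.ofReal_ne_top (hJtop t ht)
          · intro x hx
            refine hsupp x ?_
            by_cases hc : |g x| ≤ t/2
            · exact absurd (by simp [hg2, hc]) hx
            · simpa [hg2, hc] using hx
          · simp [ENNReal.ofReal_eq_zero, not_le]
            positivity
  -- layer cake
  have step1 : (∫⁻ x in G, h x ^ 2)
      = ∫⁻ t in Set.Ioi (0:ℝ), ENNReal.ofReal (2*t)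
          * volume (G ∩ {x | ENNReal.ofReal t < h x}) := by
    have e1 : (∫⁻ x in G, h x ^ 2)
        = ∫⁻ x in G, ∫⁻ t in Set.Ioi (0:ℝ),
            ENNReal.ofReal (2*t) * (if ENNReal.ofReal t < h x then 1 else 0) := by
      refine lintegral_congr fun x => ?_
      rw [lintegral_two_t (h x)]
    have hmeasu : Measurable (Function.uncurry fun (x : Fin n → ℝ) (t : ℝ) =>
        ENNReal.ofReal (2*t) * (if ENNReal.ofReal t < h x then 1 else 0)) := by
      apply Measurable.mul
      · exact ENNReal.measurable_ofReal.comp (by fun_prop)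
      · exact Measurable.ite
          (measurableSet_lt (ENNReal.measurable_ofReal.comp measurable_snd)
            (hh.comp measurable_fst)) measurable_const measurable_const
    have e2 := lintegral_lintegral_swap (μ := volume.restrict G)
      (ν := volume.restrict (Set.Ioi (0:ℝ))) hmeasu.aemeasurable
    rw [e1, e2]
    refine lintegral_congr fun t => ?_
    rw [lintegral_const_mul' _ _ ENNReal.ofReal_ne_top]
    congr 1
    have hset : MeasurableSet {x | ENNReal.ofReal t < h x} :=
      measurableSet_lt measurable_const hh
    have hind : ∀ x, (if ENNReal.ofReal t < h x then (1:ℝ≥0∞) else 0)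
        = Set.indicator {x | ENNReal.ofReal t < h x} (fun _ => (1:ℝ≥0∞)) x := by
      intro x; rw [Set.indicator_apply]; rfl
    rw [lintegral_congr hind, lintegral_indicator hset, setLIntegral_one,
      Measure.restrict_apply hset, Set.inter_comm]
  have step2 : (∫⁻ t in Set.Ioi (0:ℝ), ENNReal.ofReal (2*t)
        * volume (G ∩ {x | ENNReal.ofReal t < h x}))
      ≤ ∫⁻ t in Set.Ioi (0:ℝ), 4 * (4 ^ n * ν' * J t) := by
    refine setLIntegral_mono' measurableSet_Ioi fun t ht => ?_
    simp only [Set.mem_Ioi] at ht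
    calc ENNReal.ofReal (2*t) * volume (G ∩ {x | ENNReal.ofReal t < h x})
        ≤ ENNReal.ofReal (2*t) * (4 ^ n * ν' * J t / ENNReal.ofReal (t/2)) :=
          mul_le_mul_right (hweak t ht) _
      _ = 4 * (ENNReal.ofReal (t/2) * (4 ^ n * ν' * J t / ENNReal.ofReal (t/2))) := by
          have : ENNReal.ofReal (2*t) = 4 * ENNReal.ofReal (t/2) := by
            rw [show (2:ℝ)*t = 4*(t/2) by ring, ENNReal.ofReal_mul (by norm_num)]
            norm_num
          rw [this, mul_assoc]
      _ ≤ 4 * (4 ^ n * ν' * J t) := mul_le_mul_right ENNReal.mul_div_le _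
  have step3 : (∫⁻ t in Set.Ioi (0:ℝ), 4 * (4 ^ n * ν' * J t))
      = 4 * (4 ^ n * ν') * ∫⁻ t in Set.Ioi (0:ℝ), J t := by
    rw [← lintegral_const_mul' (4 * (4 ^ n * ν')) J
      (ENNReal.mul_ne_top (by norm_num)
        (ENNReal.mul_ne_top (ENNReal.pow_ne_top (by norm_num)) ENNReal.ofReal_ne_top))]
    refine lintegral_congr fun t => ?_
    ring
  have step4 : (∫⁻ t in Set.Ioi (0:ℝ), J t) = ∫⁻ x, 2 * ENNReal.ofReal |g x| ^ 2 := by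
    have hmeasu2 : Measurable (Function.uncurry fun (t : ℝ) (x : Fin n → ℝ) =>
        ENNReal.ofReal |g2 t x|) := by
      apply ENNReal.measurable_ofReal.comp
      apply Measurable.abs
      exact Measurable.ite
        (measurableSet_le ((hg.comp measurable_snd).abs) (by fun_prop))
        measurable_const (hg.comp measurable_snd)
    have e3 := lintegral_lintegral_swap (μ := volume.restrict (Set.Ioi (0:ℝ)))
      (ν := (volume : Measure (Fin n → ℝ))) hmeasu2.aemeasurable
    rw [hJ]
    simp only []
    rw [e3]
    refine lintegral_congr fun x => ?_
    have : ∀ t : ℝ, ENNReal.ofReal |g2 t x|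
        = (if |g x| ≤ t/2 then (0:ℝ≥0∞) else ENNReal.ofReal |g x|) := by
      intro t
      by_cases hc : |g x| ≤ t/2 <;> simp [hg2, hc]
    rw [lintegral_congr this, lintegral_trunc |g x| (abs_nonneg _)]
  calc (∫⁻ x in G, h x ^ 2)
      ≤ 4 * (4 ^ n * ν') * ∫⁻ t in Set.Ioi (0:ℝ), J t := by
        rw [step1, ← step3]; exact step2
    _ = 4 * (4 ^ n * ν') * (2 * ∫⁻ x, ENNReal.ofReal |g x| ^ 2) := by
        rw [step4, lintegral_const_mul' 2 _ (by norm_num)]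
    _ ≤ 4 * (4 ^ n * ν') * (2 * ∫⁻ x, ENNReal.ofReal |f x| ^ 2) := by
        exact mul_le_mul_right (mul_le_mul_right hgsq _) _
    _ = 8 * 4 ^ n * ν' * ∫⁻ x, ENNReal.ofReal |f x| ^ 2 := by ring

lemma cube_zero (c : Fin 0 → ℝ) (r : ℝ) : centeredCube 0 c r = Set.univ := by
  ext y
  exact iff_of_true (fun i => i.elim0) trivial

lemma vol_univ_zero : volume (Set.univ : Set (Fin 0 → ℝ)) = 1 := by
  rw [MeasureTheory.volume_pi, Measure.pi_univ]
  simp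

lemma maxOp_zero (φ : (Fin 0 → ℝ) → ℝ) (x : Fin 0 → ℝ) :
    maxOp 0 φ x = ∫⁻ y, ENNReal.ofReal |φ y| := by
  apply le_antisymm
  · refine iSup_le fun c => iSup_le fun r => iSup_le fun hr => iSup_le fun hx => ?_
    rw [cube_zero c r, Measure.restrict_univ, vol_univ_zero, div_one]
  · have := le_maxOp (n := 0) (f := φ) (x := x) (c := x) (r := 1) one_pos
      (by rw [cube_zero]; trivial)
    rwa [cube_zero, Measure.restrict_univ, vol_univ_zero, div_one] at this

lemma lintegral_zero_dim (φ : (Fin 0 → ℝ) → ℝ≥0∞) (x0 : Fin 0 → ℝ) :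
    ∫⁻ y, φ y = φ x0 := by
  have : φ = fun _ => φ x0 := funext fun y => by rw [Subsingleton.elim y x0]
  rw [this, lintegral_const, vol_univ_zero, mul_one]

theorem stmt_6 (n : ℕ) (α : ℝ) (hα0 : 0 ≤ α) (hα : α < 1 / 2) :
    ∃ C : ℝ, 0 < C ∧
      ∀ (ν : ℝ), 0 < ν → ν ≤ 1 →
        ∀ (G : Set (Fin n → ℝ)), MeasurableSet G →
          ∀ (f : (Fin n → ℝ) → ℝ), Measurable f →
            (∫⁻ x in G,
                (maxOp n (Set.indicator
                  ({x | ENNReal.ofReal ν <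
                    maxOp n (Set.indicator G (fun _ => (1 : ℝ))) x}ᶜ) f) x) ^ 2) ^ ((1 : ℝ) / 2) ≤
              ENNReal.ofReal (C * ν ^ α) *
                (∫⁻ x, ENNReal.ofReal |f x| ^ 2) ^ ((1 : ℝ) / 2) := by
  classical
  refine ⟨(8 * 4 ^ n : ℝ) ^ ((1:ℝ)/2) + 1, by positivity, ?_⟩
  set C : ℝ := (8 * 4 ^ n : ℝ) ^ ((1:ℝ)/2) + 1 with hC
  have hCpos : 0 < C := by positivity
  intro ν hν hν1 G hG f hf
  have hCν : 0 < C * ν ^ α := by positivity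
  rcases Nat.eq_zero_or_pos n with hn | hn
  · -- n = 0 case
    subst hn
    have hsets : ∀ S : Set (Fin 0 → ℝ), S = ∅ ∨ S = Set.univ := by
      intro S
      by_cases h : (fun i => i.elim0 : Fin 0 → ℝ) ∈ S
      · exact Or.inr (Set.eq_univ_iff_forall.mpr fun y => by
          rwa [Subsingleton.elim y (fun i => i.elim0 : Fin 0 → ℝ)])
      · refine Or.inl (Set.eq_empty_iff_forall_notMem.mpr fun y hy => ?_)
        rw [Subsingleton.elim y (fun i => i.elim0 : Fin 0 → ℝ)] at hy
        exact h hy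
    rcases hsets G with rfl | rfl
    · rw [Measure.restrict_empty, lintegral_zero_measure,
        ENNReal.zero_rpow_of_pos (by norm_num)]
      positivity
    · have hone : maxOp 0 (Set.indicator Set.univ (fun _ => (1:ℝ))) = fun _ => 1 := by
        funext x
        rw [maxOp_zero, Set.indicator_univ]
        rw [lintegral_zero_dim _ (fun i => i.elim0)]
        norm_num
      rw [hone]
      by_cases hν' : ENNReal.ofReal ν < 1
      · have hset1 : {x : Fin 0 → ℝ | ENNReal.ofReal ν < 1} = Set.univ :=
          Set.eq_univ_iff_forall.mpr fun y => hν'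
        rw [hset1, Set.compl_univ, Set.indicator_empty]
        have hz : maxOp 0 (fun _ : Fin 0 → ℝ => (0:ℝ)) = fun _ => 0 := by
          funext x
          rw [maxOp_zero, lintegral_zero_dim (fun y => ENNReal.ofReal |(0:ℝ)|)
            (fun i => i.elim0)]
          simp
        rw [hz]
        have hzz : (∫⁻ x in (Set.univ : Set (Fin 0 → ℝ)),
            ((fun _ : Fin 0 → ℝ => (0:ℝ≥0∞)) x) ^ 2) = 0 := by simp
        rw [hzz, ENNReal.zero_rpow_of_pos (by norm_num)]
        positivity
      · have hset0 : {x : Fin 0 → ℝ | ENNReal.ofReal ν < 1} = ∅ :=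
          Set.eq_empty_iff_forall_notMem.mpr fun y => hν'
        rw [hset0, Set.compl_empty, Set.indicator_univ]
        have hν1' : ν = 1 := by
          refine le_antisymm hν1 ?_
          have := ENNReal.one_le_ofReal.mp (not_lt.mp hν')
          linarith
        have hrpow : ∀ a : ℝ≥0∞, (a ^ 2) ^ ((1:ℝ)/2) = a := by
          intro a
          rw [← ENNReal.rpow_natCast a 2, ← ENNReal.rpow_mul]
          norm_num
        have hLHS2 : (∫⁻ x in (Set.univ : Set (Fin 0 → ℝ)), (maxOp 0 f x) ^ 2)
            = (ENNReal.ofReal |f (fun i => i.elim0)|) ^ 2 := by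
          rw [Measure.restrict_univ,
            lintegral_zero_dim (fun x => (maxOp 0 f x) ^ 2) (fun i => i.elim0)]
          rw [maxOp_zero,
            lintegral_zero_dim (fun y => ENNReal.ofReal |f y|) (fun i => i.elim0)]
        have hRHS2 : (∫⁻ x : Fin 0 → ℝ, ENNReal.ofReal |f x| ^ 2)
            = (ENNReal.ofReal |f (fun i => i.elim0)|) ^ 2 :=
          lintegral_zero_dim (fun x => ENNReal.ofReal |f x| ^ 2) (fun i => i.elim0)
        rw [hLHS2, hRHS2, hrpow]
        have h1C : 1 ≤ ENNReal.ofReal (C * ν ^ α) := by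
          refine ENNReal.one_le_ofReal.mpr ?_
          rw [hν1', Real.one_rpow, mul_one, hC]
          have : (0:ℝ) ≤ (8 * 4 ^ 0 : ℝ) ^ ((1:ℝ)/2) := by positivity
          linarith
        calc ENNReal.ofReal |f fun i => i.elim0|
            = 1 * ENNReal.ofReal |f fun i => i.elim0| := (one_mul _).symm
          _ ≤ ENNReal.ofReal (C * ν ^ α) * ENNReal.ofReal |f fun i => i.elim0| :=
              mul_le_mul_left h1C _
  · -- n ≥ 1
    by_cases hF : (∫⁻ x, ENNReal.ofReal |f x| ^ 2) = ⊤
    · rw [hF, ENNReal.top_rpow_of_pos (by norm_num), ENNReal.mul_top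
        (by simp [ENNReal.ofReal_eq_zero, not_le]; positivity)]
      exact le_top
    · have key := main_est n (Nat.pos_iff_ne_zero.mp hn) G hG ν hν f hf hF
      have h1 : (∫⁻ x in G, (maxOp n (Set.indicator
          ({x | ENNReal.ofReal ν < maxOp n (Set.indicator G (fun _ => (1 : ℝ))) x}ᶜ) f) x) ^ 2)
            ^ ((1:ℝ)/2)
          ≤ (8 * 4 ^ n * ENNReal.ofReal ν * ∫⁻ x, ENNReal.ofReal |f x| ^ 2) ^ ((1:ℝ)/2) :=
        ENNReal.rpow_le_rpow key (by norm_num)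
      refine le_trans h1 ?_
      rw [ENNReal.mul_rpow_of_nonneg _ _ (by norm_num : (0:ℝ) ≤ 1/2)]
      refine mul_le_mul_left ?_ _
      have he : (8 * 4 ^ n * ENNReal.ofReal ν : ℝ≥0∞)
          = ENNReal.ofReal ((8 * 4 ^ n : ℝ) * ν) := by
        rw [ENNReal.ofReal_mul (by positivity), ENNReal.ofReal_mul (by norm_num),
          ENNReal.ofReal_pow (by norm_num)]
        norm_num
      rw [he, ENNReal.ofReal_rpow_of_pos (by positivity)]
      refine ENNReal.ofReal_le_ofReal ?_
      rw [Real.mul_rpow (by positivity) hν.le]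
      have hb1 : (8 * 4 ^ n : ℝ) ^ ((1:ℝ)/2) ≤ C := by rw [hC]; linarith
      have hb2 : ν ^ ((1:ℝ)/2) ≤ ν ^ α :=
        Real.rpow_le_rpow_of_exponent_ge hν hν1 hα.le
      exact mul_le_mul hb1 hb2 (Real.rpow_nonneg hν.le _) hCpos.le
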